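/- Let σ ∈ (0,1), γ ∈ (0,2), λ > 0, let A : H → Set H and B : H → H be monotone, and let u* ∈ Ω. Suppose w, v ∈ H satisfy w − λB(w) ∈ v + λA(v) and λ‖B(w) − B(v)‖ ≤ σ‖w − v‖, set φ = (w − v) − λ(B(w) − B(v)), assume φ ≠ 0, and let δ = ⟨w − v, φ⟩/‖φ‖² and u⁺ = w − γδφ. Then ‖u⁺ − u*‖² ≤ ‖w − u*‖² − E·‖u⁺ − w‖², where E = ((2 − γ)/γ)·((1 − σ)/(1 + σ))⁴. -/

import Mathlib

open RealInnerProductSpace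

/-- One-step contraction inequality in terms of the displacement:
`‖u⁺ - u*‖² ≤ ‖w - u*‖² - E‖u⁺ - w‖²` with `E = ((2 - γ)/γ)((1 - σ)/(1 + σ))⁴`. -/
theorem contraction_step_displacement_inequality
    {H : Type*} [NormedAddCommGroup H] [InnerProductSpace ℝ H] [CompleteSpace H]
    (σ γ lam : ℝ) (hσ : σ ∈ Set.Ioo (0 : ℝ) 1) (hγ : γ ∈ Set.Ioo (0 : ℝ) 2) (hlam : 0 < lam)
    (A : H → Set H) (B : H → H)
    (hAmono : ∀ u v : H, ∀ a ∈ A u, ∀ b ∈ A v, 0 ≤ ⟪a - b, u - v⟫)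
    (hBmono : ∀ u v : H, 0 ≤ ⟪B u - B v, u - v⟫)
    (ustar : H) (hstar : -B ustar ∈ A ustar)
    (w v : H)
    (hfb : ∃ a ∈ A v, w - lam • B w = v + lam • a)
    (hls : lam * ‖B w - B v‖ ≤ σ * ‖w - v‖)
    (φ : H) (hφdef : φ = (w - v) - lam • (B w - B v)) (hφ : φ ≠ 0)
    (δ : ℝ) (hδ : δ = ⟪w - v, φ⟫ / ‖φ‖ ^ 2)
    (uplus : H) (huplus : uplus = w - (γ * δ) • φ)
    (E : ℝ) (hE : E = ((2 - γ) / γ) * ((1 - σ) / (1 + σ)) ^ 4) :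
    ‖uplus - ustar‖ ^ 2 ≤ ‖w - ustar‖ ^ 2 - E * ‖uplus - w‖ ^ 2 := by
  obtain ⟨hσ0, hσ1⟩ := hσ
  obtain ⟨hγ0, hγ2⟩ := hγ
  obtain ⟨a, haA, hfb⟩ := hfb
  have hla : lam • a = w - lam • B w - v := by rw [hfb]; abel
  have hφa : φ = lam • (a + B v) := by
    rw [hφdef, smul_add, hla, smul_sub]; abel
  have hA' := hAmono v ustar a haA (-B ustar) hstar
  have hB' := hBmono v ustar
  have hsum : 0 ≤ ⟪a + B v, v - ustar⟫ := by
    have h : a + B v = (a - (-B ustar)) + (B v - B ustar) := by abel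
    rw [h, inner_add_left]
    exact add_nonneg hA' hB'
  have hvin : 0 ≤ ⟪v - ustar, φ⟫ := by
    rw [real_inner_comm, hφa, real_inner_smul_left]
    exact mul_nonneg hlam.le hsum
  have hφn : (0:ℝ) < ‖φ‖ ^ 2 := pow_pos (norm_pos_iff.mpr hφ) 2
  have hδφ : δ * ‖φ‖ ^ 2 = ⟪w - v, φ⟫ := by
    rw [hδ]; field_simp
  have hwv : (1 - σ) * ‖w - v‖ ^ 2 ≤ ⟪w - v, φ⟫ := by
    rw [hφdef, inner_sub_right, real_inner_smul_right, real_inner_self_eq_norm_sq]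
    have h1 : ⟪w - v, B w - B v⟫ ≤ ‖w - v‖ * ‖B w - B v‖ := real_inner_le_norm _ _
    nlinarith [norm_nonneg (w - v), norm_nonneg (B w - B v)]
  have hδ0 : 0 ≤ δ := by
    rw [hδ]
    apply div_nonneg _ (sq_nonneg _)
    nlinarith [sq_nonneg ‖w - v‖]
  have hkey : δ * ‖φ‖ ^ 2 ≤ ⟪w - ustar, φ⟫ := by
    have h : ⟪w - ustar, φ⟫ = ⟪w - v, φ⟫ + ⟪v - ustar, φ⟫ := by
      rw [← inner_add_left]
      congr 1
      abel
    rw [h, hδφ]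
    linarith
  have hexp : ‖uplus - ustar‖ ^ 2
      = ‖w - ustar‖ ^ 2 - 2 * (γ * δ) * ⟪w - ustar, φ⟫ + (γ * δ) ^ 2 * ‖φ‖ ^ 2 := by
    rw [huplus]
    have h : w - (γ * δ) • φ - ustar = (w - ustar) - (γ * δ) • φ := by abel
    rw [h, norm_sub_sq_real, real_inner_smul_right, norm_smul, Real.norm_eq_abs, mul_pow, sq_abs]
    ring
  have hupw : ‖uplus - w‖ ^ 2 = (γ * δ) ^ 2 * ‖φ‖ ^ 2 := by
    rw [huplus]
    have h : w - (γ * δ) • φ - w = -((γ * δ) • φ) := by abel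
    rw [h, norm_neg, norm_smul, Real.norm_eq_abs, mul_pow, sq_abs]
  have ht : ((1 - σ) / (1 + σ)) ^ 4 ≤ 1 := by
    have h0 : 0 ≤ (1 - σ) / (1 + σ) := div_nonneg (by linarith) (by linarith)
    have h1 : (1 - σ) / (1 + σ) ≤ 1 := by
      rw [div_le_one (by linarith)]; linarith
    calc ((1 - σ) / (1 + σ)) ^ 4 ≤ 1 ^ 4 := by gcongr
      _ = 1 := one_pow 4
  have hE1 : E ≤ (2 - γ) / γ := by
    rw [hE]
    have := mul_le_of_le_one_right (le_of_lt (div_pos (by linarith : (0:ℝ) < 2 - γ) hγ0)) ht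
    linarith
  have h1 : 2 * γ * δ * (δ * ‖φ‖ ^ 2) ≤ 2 * γ * δ * ⟪w - ustar, φ⟫ :=
    mul_le_mul_of_nonneg_left hkey (by positivity)
  have h2 : E * (γ ^ 2 * δ ^ 2 * ‖φ‖ ^ 2) ≤ ((2 - γ) / γ) * (γ ^ 2 * δ ^ 2 * ‖φ‖ ^ 2) :=
    mul_le_mul_of_nonneg_right hE1 (by positivity)
  have h3 : ((2 - γ) / γ) * (γ ^ 2 * δ ^ 2 * ‖φ‖ ^ 2) = (2 - γ) * γ * δ ^ 2 * ‖φ‖ ^ 2 := by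
    field_simp
  rw [hexp, hupw]
  linarith [h1, h2, h3]
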